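/- Let m be a positive integer, λ = (2m-1)/m², and define f : ℝ_{>0}² → ℝ by f(r₁,r₂) = r₁ + r₂ - λ m r₁ if r₁/r₂ ≤ (m+1)/m and f(r₁,r₂) = r₁ + r₂ - λ(m+1) r₂ if r₁/r₂ ≥ (m+1)/m. Then the infimum of f(p₁,p₂) over all positive integers p₁, p₂ equals 1/m. -/

import Mathlib

theorem stmt_6 (m : ℕ) (hm : 0 < m) :
    sInf {x : ℝ | ∃ p₁ p₂ : ℕ, 0 < p₁ ∧ 0 < p₂ ∧
      x = (if (p₁ : ℝ) / p₂ ≤ (m + 1) / m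
        then (p₁ : ℝ) + p₂ - (2 * m - 1) / m ^ 2 * m * p₁
        else (p₁ : ℝ) + p₂ - (2 * m - 1) / m ^ 2 * (m + 1) * p₂)} = 1 / m := by
  obtain ⟨k, rfl⟩ : ∃ k, m = k + 1 := ⟨m - 1, (Nat.succ_pred_eq_of_pos hm).symm⟩
  set m := k + 1
  have hM : (0:ℝ) < (m:ℝ) := by positivity
  have hmem : (1 / (m:ℝ)) ∈ {x : ℝ | ∃ p₁ p₂ : ℕ, 0 < p₁ ∧ 0 < p₂ ∧
      x = (if (p₁ : ℝ) / p₂ ≤ (m + 1) / m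
        then (p₁ : ℝ) + p₂ - (2 * m - 1) / m ^ 2 * m * p₁
        else (p₁ : ℝ) + p₂ - (2 * m - 1) / m ^ 2 * (m + 1) * p₂)} := by
    refine ⟨m + 1, m, by omega, hm, ?_⟩
    rw [if_pos (by push_cast; exact le_rfl)]
    push_cast
    field_simp
    ring
  have hlb : ∀ x ∈ {x : ℝ | ∃ p₁ p₂ : ℕ, 0 < p₁ ∧ 0 < p₂ ∧
      x = (if (p₁ : ℝ) / p₂ ≤ (m + 1) / m
        then (p₁ : ℝ) + p₂ - (2 * m - 1) / m ^ 2 * m * p₁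
        else (p₁ : ℝ) + p₂ - (2 * m - 1) / m ^ 2 * (m + 1) * p₂)}, 1 / (m:ℝ) ≤ x := by
    rintro x ⟨p₁, p₂, hp₁, hp₂, rfl⟩
    have hP1 : (0:ℝ) < (p₁:ℝ) := by positivity
    have hP2 : (0:ℝ) < (p₂:ℝ) := by positivity
    split_ifs with h
    · -- m * p₁ ≤ (m+1) * p₂
      have h1 : (m:ℝ) * p₁ ≤ ((m:ℝ) + 1) * p₂ := by
        rw [div_le_div_iff₀ hP2 hM] at h
        linarith
      have h2 : m * p₁ ≤ (m + 1) * p₂ := by exact_mod_cast h1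
      have h3 : k * p₁ + 1 ≤ (k + 1) * p₂ := by
        have hmk' : m = k + 1 := rfl
        rw [hmk'] at h2
        nlinarith [hp₂, hp₁, h2, Nat.mul_le_mul_left k h2]
      have h4 : (k:ℝ) * p₁ + 1 ≤ ((k:ℝ) + 1) * p₂ := by exact_mod_cast h3
      have expand : (p₁:ℝ) + p₂ - (2 * (m:ℝ) - 1) / (m:ℝ) ^ 2 * m * p₁
          = ((m:ℝ) * p₂ - ((m:ℝ) - 1) * p₁) / m := by
        field_simp
        ring
      rw [expand, div_le_div_iff_of_pos_right hM]
      have hmk : (m:ℝ) = (k:ℝ) + 1 := by simp [m]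
      rw [hmk]
      linarith [h4]
    · have h1 : ((m:ℝ) + 1) * p₂ < (m:ℝ) * p₁ := by
        push_neg at h
        rw [div_lt_div_iff₀ hM hP2] at h
        linarith
      have h2 : (m + 1) * p₂ < m * p₁ := by exact_mod_cast h1
      have h3 : (m + 1) * p₂ + 1 ≤ m * p₁ := h2
      have h4 : ((m:ℝ) + 1) * p₂ + 1 ≤ (m:ℝ) * p₁ := by exact_mod_cast h3
      have expand : (p₁:ℝ) + p₂ - (2 * (m:ℝ) - 1) / (m:ℝ) ^ 2 * ((m:ℝ) + 1) * p₂
          = ((m:ℝ) ^ 2 * p₁ - ((m:ℝ) ^ 2 + m - 1) * p₂) / (m:ℝ) ^ 2 := by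
        field_simp
        ring
      have h1m : (1:ℝ) / (m:ℝ) = (m:ℝ) / (m:ℝ) ^ 2 := by
        field_simp
      have hm2 : (0:ℝ) < (m:ℝ) ^ 2 := by positivity
      rw [expand, h1m, div_le_div_iff_of_pos_right hm2]
      nlinarith [h4, hP2, hM]
  exact le_antisymm (csInf_le ⟨1 / (m:ℝ), hlb⟩ hmem) (le_csInf ⟨_, hmem⟩ hlb)
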